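/- For a real-valued random variable x with finite variance, the variance of ReLU(x) = max(0, x) is at most the variance of x. -/

import Mathlib

open MeasureTheory ProbabilityTheory

/-- For a real-valued random variable `x` with finite variance, the variance of
`ReLU(x) = max(0, x)` is at most the variance of `x`. -/
theorem variance_relu_le {Ω : Type*} [MeasureSpace Ω]
    (μ : Measure Ω) [IsProbabilityMeasure μ]
    (x : Ω → ℝ) (hx : MemLp x 2 μ) (hxm : Measurable x) :
    variance (fun ω => max 0 (x ω)) μ ≤ variance x μ := by
  set m : ℝ := μ[x] with hm
  set f : Ω → ℝ := fun ω => max 0 (x ω) with hfdef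
  have hf : MemLp f 2 μ := by
    have := (memLp_const (0 : ℝ) (μ := μ) (p := 2)).sup hx
    simpa [Pi.sup_def, hfdef] using this
  set c : ℝ := max 0 m with hc
  set g : Ω → ℝ := fun ω => f ω - c with hgdef
  have hg : MemLp g 2 μ := hf.sub (memLp_const c)
  -- variance is shift invariant
  have hshift : variance f μ = variance g μ := by
    rw [variance_eq_integral hf.1.aemeasurable, variance_eq_integral hg.1.aemeasurable]
    have : μ[g] = μ[f] - c := by
      rw [hgdef]
      simp [integral_sub (hf.integrable one_le_two) (integrable_const c)]
    congr 1 with ω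
    rw [this]; simp only [hgdef]; ring
  have h1 : variance g μ ≤ μ[g ^ 2] :=
    variance_le_expectation_sq hg.aestronglyMeasurable
  have h2 : μ[g ^ 2] ≤ μ[(fun ω => (x ω - m) ^ 2)] := by
    apply integral_mono (hg.integrable_sq)
    · exact (hx.sub (memLp_const m)).integrable_sq
    · intro ω
      have habs : |max 0 (x ω) - max 0 m| ≤ |x ω - m| := by
        simpa [max_comm] using abs_max_sub_max_le_abs (x ω) m 0
      have := mul_self_le_mul_self (abs_nonneg _) habs
      simpa [hgdef, hfdef, hc, Pi.pow_apply, sq, abs_mul_abs_self] using this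
  have h3 : μ[(fun ω => (x ω - m) ^ 2)] = variance x μ := by
    rw [variance_eq_integral hx.1.aemeasurable]
  calc variance f μ = variance g μ := hshift
    _ ≤ μ[g ^ 2] := h1
    _ ≤ μ[(fun ω => (x ω - m) ^ 2)] := h2
    _ = variance x μ := h3
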